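/- arXiv:1310.0932 — 7 statements merged into one kernel-verified Lean document; each statement's English description precedes it below -/
import Mathlib

section
/- Let n, q ≥ 1, let F11 ∈ ℝ^{n×n}, F12 ∈ ℝ^{n×q}, F21 ∈ ℝ^{q×n}, F22 ∈ ℝ^{q×q}. Let P1 ∈ ℝ^{n×n}, P2 ∈ ℝ^{q×q} be symmetric positive definite and let Q ∈ ℝ^{n×n} be symmetric positive definite with F11ᵀP1 + P1F11 + Q negative semidefinite. Set λ0 := λmin(Q). Then there exist λ > 0, ρ > 0 and λ1 > 0 such that for all x ∈ ℝⁿ, e ∈ ℝ^q and all τ ∈ [0, 2ρ]: xᵀ(F11ᵀP1 + P1F11)x + 2xᵀP1F12e + 2·exp((2ρ − τ)λ)·eᵀP2(F21x + F22e) − λ·exp((2ρ − τ)λ)·eᵀP2e ≤ −(λ0/2)|x|² − λ1·exp((2ρ − τ)λ)·|e|². -/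
open Matrix

set_option maxHeartbeats 1000000


lemma spectral_conj {k : ℕ} {M : Matrix (Fin k) (Fin k) ℝ} (hM : M.IsHermitian) (c : ℝ) :
    c • (1 : Matrix (Fin k) (Fin k) ℝ) - M
      = (hM.eigenvectorUnitary : Matrix (Fin k) (Fin k) ℝ) *
        (diagonal (fun i => c - hM.eigenvalues i)) *
        (hM.eigenvectorUnitary : Matrix (Fin k) (Fin k) ℝ)ᴴ := by
  have hdec := hM.spectral_theorem
  have hU : (hM.eigenvectorUnitary : Matrix (Fin k) (Fin k) ℝ) *
      star (hM.eigenvectorUnitary : Matrix (Fin k) (Fin k) ℝ) = 1 :=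
    Matrix.mem_unitaryGroup_iff.mp hM.eigenvectorUnitary.2
  have hdiag : diagonal (fun i => c - hM.eigenvalues i)
      = c • (1 : Matrix (Fin k) (Fin k) ℝ) - diagonal (RCLike.ofReal ∘ hM.eigenvalues) := by
    ext i j
    by_cases hij : i = j <;> simp [diagonal, hij, Matrix.one_apply, Matrix.sub_apply]
  rw [hdiag, Matrix.mul_sub, Matrix.sub_mul]
  simp only [← Matrix.star_eq_conjTranspose]
  simp only [Unitary.conjStarAlgAut_apply, Unitary.coe_star] at hdec
  rw [← hdec]
  congr 1
  rw [Matrix.mul_smul, Matrix.smul_mul, mul_one]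
  congr 1
  exact hU.symm

-- quadratic form upper bound via eigenvalue upper bound
lemma quad_le {k : ℕ} {M : Matrix (Fin k) (Fin k) ℝ} (hM : M.IsHermitian)
    {c : ℝ} (h : ∀ i, hM.eigenvalues i ≤ c) (y : Fin k → ℝ) :
    y ⬝ᵥ M.mulVec y ≤ c * (y ⬝ᵥ y) := by
  have hps : (c • (1 : Matrix (Fin k) (Fin k) ℝ) - M).PosSemidef := by
    rw [spectral_conj hM c]
    exact (Matrix.posSemidef_diagonal_iff.mpr
      (fun i => by linarith [h i])).mul_mul_conjTranspose_same _
  have h0 := hps.re_dotProduct_nonneg y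
  simp only [star_trivial, RCLike.re_to_real] at h0
  rw [sub_mulVec, smul_mulVec, one_mulVec, dotProduct_sub, dotProduct_smul] at h0
  simp only [smul_eq_mul] at h0
  linarith

lemma spectral_conj' {k : ℕ} {M : Matrix (Fin k) (Fin k) ℝ} (hM : M.IsHermitian) (c : ℝ) :
    M - c • (1 : Matrix (Fin k) (Fin k) ℝ)
      = (hM.eigenvectorUnitary : Matrix (Fin k) (Fin k) ℝ) *
        (diagonal (fun i => hM.eigenvalues i - c)) *
        (hM.eigenvectorUnitary : Matrix (Fin k) (Fin k) ℝ)ᴴ := by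
  have hdec := hM.spectral_theorem
  have hU : (hM.eigenvectorUnitary : Matrix (Fin k) (Fin k) ℝ) *
      star (hM.eigenvectorUnitary : Matrix (Fin k) (Fin k) ℝ) = 1 :=
    Matrix.mem_unitaryGroup_iff.mp hM.eigenvectorUnitary.2
  have hdiag : diagonal (fun i => hM.eigenvalues i - c)
      = diagonal (RCLike.ofReal ∘ hM.eigenvalues) - c • (1 : Matrix (Fin k) (Fin k) ℝ) := by
    ext i j
    by_cases hij : i = j <;> simp [diagonal, hij, Matrix.one_apply, Matrix.sub_apply]
  rw [hdiag, Matrix.mul_sub, Matrix.sub_mul]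
  simp only [← Matrix.star_eq_conjTranspose]
  simp only [Unitary.conjStarAlgAut_apply, Unitary.coe_star] at hdec
  rw [← hdec]
  congr 1
  rw [Matrix.mul_smul, Matrix.smul_mul, mul_one]
  congr 1
  exact hU.symm

lemma quad_ge {k : ℕ} {M : Matrix (Fin k) (Fin k) ℝ} (hM : M.IsHermitian)
    {c : ℝ} (h : ∀ i, c ≤ hM.eigenvalues i) (y : Fin k → ℝ) :
    c * (y ⬝ᵥ y) ≤ y ⬝ᵥ M.mulVec y := by
  have hps : (M - c • (1 : Matrix (Fin k) (Fin k) ℝ)).PosSemidef := by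
    rw [spectral_conj' hM c]
    exact (Matrix.posSemidef_diagonal_iff.mpr
      (fun i => by linarith [h i])).mul_mul_conjTranspose_same _
  have h0 := hps.re_dotProduct_nonneg y
  simp only [star_trivial, RCLike.re_to_real] at h0
  rw [sub_mulVec, smul_mulVec, one_mulVec, dotProduct_sub, dotProduct_smul] at h0
  simp only [smul_eq_mul] at h0
  linarith

lemma dot_self_nonneg {k : ℕ} (v : Fin k → ℝ) : 0 ≤ v ⬝ᵥ v :=
  Finset.sum_nonneg fun i _ => mul_self_nonneg _

lemma cross_exists {m k : ℕ} (hk : 1 ≤ k) (B : Matrix (Fin m) (Fin k) ℝ) :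
    ∃ c : ℝ, 0 ≤ c ∧ ∀ (ε : ℝ), 0 < ε → ∀ (x : Fin m → ℝ) (y : Fin k → ℝ),
      2 * (x ⬝ᵥ B.mulVec y) ≤ ε * (x ⬝ᵥ x) + (c / ε) * (y ⬝ᵥ y) := by
  haveI : Nonempty (Fin k) := ⟨⟨0, hk⟩⟩
  have hH : (Bᴴ * B).IsHermitian := isHermitian_conjTranspose_mul_self B
  set c := ⨆ i, hH.eigenvalues i with hc
  have hbdd : BddAbove (Set.range hH.eigenvalues) :=
    (Set.finite_range _).bddAbove
  have hcle : ∀ i, hH.eigenvalues i ≤ c := fun i => le_ciSup hbdd i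
  have hc0 : 0 ≤ c :=
    le_trans (Matrix.eigenvalues_conjTranspose_mul_self_nonneg B (Classical.arbitrary _))
      (hcle _)
  refine ⟨c, hc0, fun ε hε x y => ?_⟩
  have hBy : (B.mulVec y) ⬝ᵥ (B.mulVec y) ≤ c * (y ⬝ᵥ y) := by
    have heq : y ⬝ᵥ (Bᴴ * B).mulVec y = (B.mulVec y) ⬝ᵥ (B.mulVec y) := by
      rw [← Matrix.mulVec_mulVec, Matrix.dotProduct_mulVec,
        Matrix.conjTranspose_eq_transpose_of_trivial, Matrix.vecMul_transpose]
    rw [← heq]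
    exact quad_le hH hcle y
  have h0 : 0 ≤ (ε • x - B.mulVec y) ⬝ᵥ (ε • x - B.mulVec y) := dot_self_nonneg _
  simp only [sub_dotProduct, dotProduct_sub, smul_dotProduct, dotProduct_smul,
    smul_eq_mul] at h0
  have hcomm : (B.mulVec y) ⬝ᵥ x = x ⬝ᵥ B.mulVec y := dotProduct_comm _ _
  rw [hcomm] at h0
  rw [← sub_nonneg]
  have hexp : ε * (x ⬝ᵥ x) + c / ε * (y ⬝ᵥ y) - 2 * (x ⬝ᵥ B.mulVec y)
      = ((ε * ε * (x ⬝ᵥ x) + c * (y ⬝ᵥ y) - 2 * ε * (x ⬝ᵥ B.mulVec y))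
        + (c * (y ⬝ᵥ y) - (B.mulVec y) ⬝ᵥ (B.mulVec y))
        + ((B.mulVec y) ⬝ᵥ (B.mulVec y) - c * (y ⬝ᵥ y))) / ε := by
    field_simp; ring
  rw [hexp]
  apply div_nonneg _ (le_of_lt hε)
  nlinarith [h0, hBy]


/-- Flow-decrease estimate (13)-(14) in the proof of Theorem 1 (dwell-time
phase of the timer): there exist `λ, ρ, λ1 > 0` such that for all `x`, `e` and
all `τ ∈ [0, 2ρ]`,
`xᵀ(F11ᵀP1 + P1F11)x + 2xᵀP1F12e + 2 exp((2ρ-τ)λ) eᵀP2(F21x + F22e)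
  - λ exp((2ρ-τ)λ) eᵀP2e ≤ -(λ0/2)|x|² - λ1 exp((2ρ-τ)λ)|e|²`,
where `λ0 = λmin(Q)`. -/
theorem stmt_4 (n q : ℕ) (hn : 1 ≤ n) (hq : 1 ≤ q)
    (F11 : Matrix (Fin n) (Fin n) ℝ) (F12 : Matrix (Fin n) (Fin q) ℝ)
    (F21 : Matrix (Fin q) (Fin n) ℝ) (F22 : Matrix (Fin q) (Fin q) ℝ)
    (P1 : Matrix (Fin n) (Fin n) ℝ) (P2 : Matrix (Fin q) (Fin q) ℝ)
    (hP1 : P1.PosDef) (hP2 : P2.PosDef)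
    (Q : Matrix (Fin n) (Fin n) ℝ) (hQ : Q.PosDef)
    (hLyap : (-(F11ᵀ * P1 + P1 * F11 + Q)).PosSemidef) :
    ∃ lam ρ lam1 : ℝ, 0 < lam ∧ 0 < ρ ∧ 0 < lam1 ∧
      ∀ (x : Fin n → ℝ) (e : Fin q → ℝ) (τ : ℝ), τ ∈ Set.Icc 0 (2 * ρ) →
        x ⬝ᵥ (F11ᵀ * P1 + P1 * F11).mulVec x
          + 2 * (x ⬝ᵥ (P1 * F12).mulVec e)
          + 2 * Real.exp ((2 * ρ - τ) * lam) * (e ⬝ᵥ P2.mulVec (F21.mulVec x + F22.mulVec e))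
          - lam * Real.exp ((2 * ρ - τ) * lam) * (e ⬝ᵥ P2.mulVec e)
        ≤ -((⨅ i, hQ.1.eigenvalues i) / 2) * (x ⬝ᵥ x)
          - lam1 * Real.exp ((2 * ρ - τ) * lam) * (e ⬝ᵥ e) := by
  haveI : Nonempty (Fin n) := ⟨⟨0, hn⟩⟩
  haveI : Nonempty (Fin q) := ⟨⟨0, hq⟩⟩
  set lam0 : ℝ := ⨅ i, hQ.1.eigenvalues i with hlam0def
  have hlam0le : ∀ i, lam0 ≤ hQ.1.eigenvalues i :=
    fun i => ciInf_le ((Set.finite_range _).bddBelow) i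
  have hlam0pos : 0 < lam0 := by
    obtain ⟨i0, hi0⟩ := Finite.exists_min hQ.1.eigenvalues
    exact lt_of_lt_of_le (hQ.eigenvalues_pos i0) (le_ciInf hi0)
  set p2 : ℝ := ⨅ i, hP2.1.eigenvalues i with hp2def
  have hp2le : ∀ i, p2 ≤ hP2.1.eigenvalues i :=
    fun i => ciInf_le ((Set.finite_range _).bddBelow) i
  have hp2pos : 0 < p2 := by
    obtain ⟨i0, hi0⟩ := Finite.exists_min hP2.1.eigenvalues
    exact lt_of_lt_of_le (hP2.eigenvalues_pos i0) (le_ciInf hi0)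
  obtain ⟨c12, hc12, hB12⟩ := cross_exists hq (P1 * F12)
  obtain ⟨c21, hc21, hB21⟩ := cross_exists hq ((P2 * F21)ᵀ)
  obtain ⟨c22, hc22, hB22⟩ := cross_exists hq (P2 * F22)
  set C0 : ℝ := c12 / (lam0/4) + c21 / (lam0/8) + (1 + c22 / 1) with hC0def
  have hd12 : 0 ≤ c12 / (lam0/4) := by positivity
  have hd21 : 0 ≤ c21 / (lam0/8) := by positivity
  have hd22 : 0 ≤ c22 / 1 := by positivity
  have hC0nn : 0 < C0 + 1 := by rw [hC0def]; linarith
  set lam : ℝ := (C0 + 1) / p2 with hlamdef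
  have hlam : 0 < lam := div_pos hC0nn hp2pos
  have hlamp2 : lam * p2 = C0 + 1 := by
    rw [hlamdef]; field_simp
  set ρ : ℝ := Real.log 2 / (2 * lam) with hρdef
  have hρ : 0 < ρ := by
    apply div_pos (Real.log_pos (by norm_num)) (by linarith)
  refine ⟨lam, ρ, 1, hlam, hρ, one_pos, ?_⟩
  intro x e τ hτ
  obtain ⟨hτ0, hτ2⟩ := hτ
  set E : ℝ := Real.exp ((2 * ρ - τ) * lam) with hEdef
  have hE0 : 0 < E := Real.exp_pos _
  have hE1 : 1 ≤ E := Real.one_le_exp (mul_nonneg (by linarith) hlam.le)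
  have hE2 : E ≤ 2 := by
    have harg : (2 * ρ - τ) * lam ≤ Real.log 2 := by
      have h1 : (2 * ρ - τ) * lam ≤ 2 * ρ * lam :=
        mul_le_mul_of_nonneg_right (by linarith) hlam.le
      have h2 : 2 * ρ * lam = Real.log 2 := by
        rw [hρdef]; field_simp
      linarith
    calc E ≤ Real.exp (Real.log 2) := Real.exp_le_exp.mpr harg
      _ = 2 := Real.exp_log two_pos
  set X : ℝ := x ⬝ᵥ x with hXdef
  set Y : ℝ := e ⬝ᵥ e with hYdef
  have hX : 0 ≤ X := dot_self_nonneg x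
  have hY : 0 ≤ Y := dot_self_nonneg e
  -- split the coupling term
  have hsplit : e ⬝ᵥ P2.mulVec (F21.mulVec x + F22.mulVec e)
      = x ⬝ᵥ ((P2 * F21)ᵀ).mulVec e + e ⬝ᵥ (P2 * F22).mulVec e := by
    rw [Matrix.mulVec_add, dotProduct_add, Matrix.mulVec_mulVec, Matrix.mulVec_mulVec]
    congr 1
    rw [Matrix.dotProduct_mulVec, dotProduct_comm, ← Matrix.mulVec_transpose]
  rw [hsplit]
  -- bound on the x-quadratic term
  have G1 : x ⬝ᵥ (F11ᵀ * P1 + P1 * F11).mulVec x ≤ -(lam0 * X) := by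
    have h0 := hLyap.re_dotProduct_nonneg x
    simp only [star_trivial, RCLike.re_to_real] at h0
    rw [Matrix.neg_mulVec, dotProduct_neg, Matrix.add_mulVec, dotProduct_add] at h0
    have hQx : lam0 * X ≤ x ⬝ᵥ Q.mulVec x := quad_ge hQ.1 hlam0le x
    linarith
  have G2 : 2 * (x ⬝ᵥ (P1 * F12).mulVec e) ≤ lam0/4 * X + c12 / (lam0/4) * Y :=
    hB12 (lam0/4) (by positivity) x e
  have G6 : c12 / (lam0/4) * Y ≤ c12 / (lam0/4) * (E * Y) :=
    mul_le_mul_of_nonneg_left (le_mul_of_one_le_left hY hE1) hd12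
  have G3 : 2 * E * (x ⬝ᵥ ((P2 * F21)ᵀ).mulVec e)
      ≤ lam0/4 * X + c21 / (lam0/8) * (E * Y) := by
    have hb := hB21 (lam0/8) (by positivity) x e
    have hkey : 0 ≤ lam0 * X * (2 - E) :=
      mul_nonneg (mul_nonneg hlam0pos.le hX) (sub_nonneg.mpr hE2)
    calc 2 * E * (x ⬝ᵥ ((P2 * F21)ᵀ).mulVec e)
        = E * (2 * (x ⬝ᵥ ((P2 * F21)ᵀ).mulVec e)) := by ring
      _ ≤ E * (lam0/8 * X + c21 / (lam0/8) * Y) :=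
          mul_le_mul_of_nonneg_left hb hE0.le
      _ = E * (lam0/8 * X) + c21 / (lam0/8) * (E * Y) := by ring
      _ ≤ lam0/4 * X + c21 / (lam0/8) * (E * Y) := by nlinarith [hkey]
  have G4 : 2 * E * (e ⬝ᵥ (P2 * F22).mulVec e) ≤ (1 + c22 / 1) * (E * Y) := by
    have hb := hB22 1 one_pos e e
    calc 2 * E * (e ⬝ᵥ (P2 * F22).mulVec e)
        = E * (2 * (e ⬝ᵥ (P2 * F22).mulVec e)) := by ring
      _ ≤ E * (1 * Y + c22 / 1 * Y) := mul_le_mul_of_nonneg_left hb hE0.le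
      _ = (1 + c22 / 1) * (E * Y) := by ring
  have G5 : (C0 + 1) * (E * Y) ≤ lam * E * (e ⬝ᵥ P2.mulVec e) := by
    have hP2e : p2 * Y ≤ e ⬝ᵥ P2.mulVec e := quad_ge hP2.1 hp2le e
    have h := mul_le_mul_of_nonneg_left hP2e (mul_nonneg hlam.le hE0.le)
    calc (C0 + 1) * (E * Y) = lam * E * (p2 * Y) := by rw [← hlamp2]; ring
      _ ≤ lam * E * (e ⬝ᵥ P2.mulVec e) := h
  rw [hC0def] at G5
  linarith only [G1, G2, G3, G4, G5, G6]
end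

section
/- Let n, q ≥ 1, let F11 ∈ ℝ^{n×n}, F12 ∈ ℝ^{n×q}, F21 ∈ ℝ^{q×n}, F22 ∈ ℝ^{q×q}, let P1 ∈ ℝ^{n×n}, P2 ∈ ℝ^{q×q} be symmetric positive definite, and let γx > 0, γe > 0, λ > 0. Then there exist Δ and ρ with 0 < Δ < ρ such that for all τ ∈ [Δ, 2ρ] and all x ∈ ℝⁿ, e ∈ ℝ^q satisfying both xᵀP1(F11x + F12e) + eᵀP2(F21x + F22e) ≤ −γx|x|² and |e| ≤ γe|x|, one has: 2xᵀP1(F11x + F12e) + 2·exp((2ρ − τ)λ)·eᵀP2(F21x + F22e) ≤ −γx|x|². -/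
open Matrix

lemma dot_self_nonneg' {m : ℕ} (u : Fin m → ℝ) : 0 ≤ u ⬝ᵥ u :=
  Finset.sum_nonneg fun i _ => mul_self_nonneg (u i)

lemma sq_le_dot' {m : ℕ} (u : Fin m → ℝ) (i : Fin m) : u i * u i ≤ u ⬝ᵥ u :=
  Finset.single_le_sum (fun k _ => mul_self_nonneg (u k)) (Finset.mem_univ i)

lemma dot_mulVec_bound {a b : ℕ} (M : Matrix (Fin a) (Fin b) ℝ)
    (u : Fin a → ℝ) (v : Fin b → ℝ) :
    u ⬝ᵥ M.mulVec v ≤ (∑ i, ∑ j, |M i j|) * (u ⬝ᵥ u + v ⬝ᵥ v) := by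
  have h : u ⬝ᵥ M.mulVec v = ∑ i, ∑ j, u i * (M i j * v j) := by
    simp [dotProduct, Matrix.mulVec, Finset.mul_sum]
  rw [h, Finset.sum_mul]
  apply Finset.sum_le_sum
  intro i _
  rw [Finset.sum_mul]
  apply Finset.sum_le_sum
  intro j _
  have h1 : u i * (M i j * v j) ≤ |M i j| * (|u i| * |v j|) := by
    calc u i * (M i j * v j) ≤ |u i * (M i j * v j)| := le_abs_self _
      _ = |M i j| * (|u i| * |v j|) := by rw [abs_mul, abs_mul]; ring
  have h2 : |u i| * |v j| ≤ u ⬝ᵥ u + v ⬝ᵥ v := by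
    nlinarith [sq_abs (u i), sq_abs (v j), sq_nonneg (|u i| - |v j|),
      sq_le_dot' u i, sq_le_dot' v j]
  calc u i * (M i j * v j) ≤ |M i j| * (|u i| * |v j|) := h1
    _ ≤ |M i j| * (u ⬝ᵥ u + v ⬝ᵥ v) :=
        mul_le_mul_of_nonneg_left h2 (abs_nonneg _)

lemma arith_aux (S1 S2 g X : ℝ) (hS1 : 0 ≤ S1) (hS2 : 0 ≤ S2) (hX : 0 ≤ X) :
    S1 * (g ^ 2 * X + X) + S2 * (g ^ 2 * X + g ^ 2 * X)
      ≤ 2 * (S1 + S2 + 1) * (1 + g ^ 2) * X := by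
  nlinarith [mul_nonneg hS1 hX, mul_nonneg hS2 hX, sq_nonneg g, hX,
    mul_nonneg (mul_nonneg hS1 hX) (sq_nonneg g),
    mul_nonneg (mul_nonneg hS2 hX) (sq_nonneg g)]

/-- Flow-decrease estimate (15) in the proof of Theorem 1: on the flow set of
the synchronous transmission policy (directional derivative of
`V(x,e) = (1/2)(xᵀP1x + eᵀP2e)` bounded by `-γx|x|²` and `|e| ≤ γe|x|`),
for suitable `0 < Δ < ρ` and all `τ ∈ [Δ, 2ρ]`, the derivative of
`W(x,e,τ) = xᵀP1x + exp((2ρ-τ)λ) eᵀP2e` along the flow is at most `-γx|x|²`. -/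
theorem stmt_5 (n q : ℕ) (hn : 1 ≤ n) (hq : 1 ≤ q)
    (F11 : Matrix (Fin n) (Fin n) ℝ) (F12 : Matrix (Fin n) (Fin q) ℝ)
    (F21 : Matrix (Fin q) (Fin n) ℝ) (F22 : Matrix (Fin q) (Fin q) ℝ)
    (P1 : Matrix (Fin n) (Fin n) ℝ) (P2 : Matrix (Fin q) (Fin q) ℝ)
    (hP1 : P1.PosDef) (hP2 : P2.PosDef)
    (γx γe lam : ℝ) (hγx : 0 < γx) (hγe : 0 < γe) (hlam : 0 < lam) :
    ∃ Δ ρ : ℝ, 0 < Δ ∧ Δ < ρ ∧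
      ∀ (τ : ℝ), τ ∈ Set.Icc Δ (2 * ρ) →
      ∀ (x : Fin n → ℝ) (e : Fin q → ℝ),
        x ⬝ᵥ P1.mulVec (F11.mulVec x + F12.mulVec e)
          + e ⬝ᵥ P2.mulVec (F21.mulVec x + F22.mulVec e) ≤ -γx * (x ⬝ᵥ x) →
        Real.sqrt (e ⬝ᵥ e) ≤ γe * Real.sqrt (x ⬝ᵥ x) →
        2 * (x ⬝ᵥ P1.mulVec (F11.mulVec x + F12.mulVec e))
          + 2 * Real.exp ((2 * ρ - τ) * lam)
            * (e ⬝ᵥ P2.mulVec (F21.mulVec x + F22.mulVec e))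
        ≤ -γx * (x ⬝ᵥ x) := by
  set S1 : ℝ := ∑ i, ∑ j, |(P2 * F21) i j| with hS1
  set S2 : ℝ := ∑ i, ∑ j, |(P2 * F22) i j| with hS2
  have hS1n : 0 ≤ S1 := Finset.sum_nonneg fun i _ =>
    Finset.sum_nonneg fun j _ => abs_nonneg _
  have hS2n : 0 ≤ S2 := Finset.sum_nonneg fun i _ =>
    Finset.sum_nonneg fun j _ => abs_nonneg _
  set K : ℝ := 2 * (S1 + S2 + 1) * (1 + γe ^ 2) with hK
  have hKpos : 0 < K := by positivity
  set c : ℝ := γx / (2 * K) with hc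
  have hcpos : 0 < c := by positivity
  set ρ : ℝ := Real.log (1 + c) / (2 * lam) with hρ
  have hρpos : 0 < ρ := by
    apply div_pos (Real.log_pos (by linarith)) (by linarith)
  refine ⟨ρ / 2, ρ, by linarith, by linarith, ?_⟩
  rintro τ ⟨hτ1, hτ2⟩ x e hA he
  set X : ℝ := x ⬝ᵥ x with hX
  set E : ℝ := e ⬝ᵥ e with hE
  have hXn : 0 ≤ X := dot_self_nonneg' x
  have hEn : 0 ≤ E := dot_self_nonneg' e
  -- |e|² ≤ γe² |x|²
  have hE2 : E ≤ γe ^ 2 * X := by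
    have h1 : Real.sqrt E ^ 2 ≤ (γe * Real.sqrt X) ^ 2 :=
      pow_le_pow_left₀ (Real.sqrt_nonneg _) he 2
    rwa [Real.sq_sqrt hEn, mul_pow, Real.sq_sqrt hXn] at h1
  -- bound on B
  set B : ℝ := e ⬝ᵥ P2.mulVec (F21.mulVec x + F22.mulVec e) with hBdef
  have hBsplit : B = e ⬝ᵥ (P2 * F21).mulVec x + e ⬝ᵥ (P2 * F22).mulVec e := by
    rw [hBdef, Matrix.mulVec_add, dotProduct_add, Matrix.mulVec_mulVec,
      Matrix.mulVec_mulVec]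
  have hB1 : e ⬝ᵥ (P2 * F21).mulVec x ≤ S1 * (E + X) := dot_mulVec_bound _ e x
  have hB2 : e ⬝ᵥ (P2 * F22).mulVec e ≤ S2 * (E + E) := dot_mulVec_bound _ e e
  have hB : B ≤ K * X := by
    rw [hBsplit]
    have h1 : S1 * (E + X) ≤ S1 * (γe ^ 2 * X + X) :=
      mul_le_mul_of_nonneg_left (by linarith) hS1n
    have h2 : S2 * (E + E) ≤ S2 * (γe ^ 2 * X + γe ^ 2 * X) :=
      mul_le_mul_of_nonneg_left (by linarith) hS2n
    have h3 := arith_aux S1 S2 γe X hS1n hS2n hXn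
    rw [hK]
    linarith
  -- exponential bounds
  set μ : ℝ := Real.exp ((2 * ρ - τ) * lam) with hμdef
  have hμ1 : 1 ≤ μ := Real.one_le_exp (mul_nonneg (by linarith) hlam.le)
  have hμ2 : μ ≤ 1 + c := by
    have h1 : (2 * ρ - τ) * lam ≤ Real.log (1 + c) := by
      have : 2 * ρ * lam = Real.log (1 + c) := by
        rw [hρ]; field_simp
      have h2 : (2 * ρ - τ) * lam ≤ 2 * ρ * lam :=
        mul_le_mul_of_nonneg_right (by linarith) hlam.le
      linarith
    calc μ ≤ Real.exp (Real.log (1 + c)) := Real.exp_le_exp.mpr h1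
      _ = 1 + c := Real.exp_log (by linarith)
  -- combine
  have hcK : c * K = γx / 2 := by
    rw [hc]; field_simp
  have key : (μ - 1) * B ≤ (γx / 2) * X := by
    calc (μ - 1) * B ≤ (μ - 1) * (K * X) :=
          mul_le_mul_of_nonneg_left hB (by linarith)
      _ ≤ c * (K * X) := by
          exact mul_le_mul_of_nonneg_right (by linarith) (mul_nonneg hKpos.le hXn)
      _ = (γx / 2) * X := by rw [← mul_assoc, hcK]
  linarith [hA, key, mul_le_mul_of_nonneg_left hB (by linarith : (0:ℝ) ≤ μ - 1)]
end

section
/- Let n, q ≥ 1, A ∈ ℝ^{n×n}, B ∈ ℝ^{n×q}, C ∈ ℝ^{q×n}, and define F := [[A + BC, B], [−C(A + BC), −CB]] ∈ ℝ^{(n+q)×(n+q)}. If B has full column rank (rank B = q), then for every s ∈ ℂ, the complex (2n+q) × (n+q) matrix obtained by stacking F − s·I_{n+q} on top of [Iₙ 0] has rank n + q; that is, the pair ([Iₙ 0], F) is observable. -/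
open Matrix

/-- A real matrix with full column rank has injective `mulVec`. -/
lemma aux_inj_of_rank {n q : ℕ} (B : Matrix (Fin n) (Fin q) ℝ) (hB : B.rank = q) :
    ∀ x : Fin q → ℝ, B.mulVec x = 0 → x = 0 := by
  have hker : LinearMap.ker B.mulVecLin = ⊥ := by
    have h1 := LinearMap.finrank_range_add_finrank_ker B.mulVecLin
    rw [Matrix.rank] at hB
    rw [hB] at h1
    have h2 : Module.finrank ℝ (Fin q → ℝ) = q := by simp
    rw [h2] at h1
    have h3 : Module.finrank ℝ (LinearMap.ker B.mulVecLin) = 0 := by omega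
    exact Submodule.finrank_eq_zero.mp h3
  intro x hx
  have : x ∈ LinearMap.ker B.mulVecLin := hx
  rw [hker] at this
  simpa using this

/-- The complexification of a real matrix with full column rank has injective `mulVec`. -/
lemma aux_inj_complex {n q : ℕ} (B : Matrix (Fin n) (Fin q) ℝ) (hB : B.rank = q)
    (e : Fin q → ℂ) (he : ∀ i : Fin n, ∑ j, (B i j : ℂ) * e j = 0) : e = 0 := by
  have hre : (fun j => (e j).re) = 0 := by
    refine aux_inj_of_rank B hB _ ?_
    funext i
    have := congrArg Complex.re (he i)
    simpa [Complex.re_sum, Matrix.mulVec, dotProduct] using this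
  have him : (fun j => (e j).im) = 0 := by
    refine aux_inj_of_rank B hB _ ?_
    funext i
    have := congrArg Complex.im (he i)
    simpa [Complex.im_sum, Matrix.mulVec, dotProduct] using this
  funext j
  have h1 : (e j).re = 0 := congrFun hre j
  have h2 : (e j).im = 0 := congrFun him j
  exact Complex.ext (by simpa using h1) (by simpa using h2)

/-- Observability of the pair `([Iₙ 0], F)` for the error-dynamics flow matrix
`F = [[A+BC, B], [-C(A+BC), -CB]]` when `B` has full column rank: for every
`s ∈ ℂ`, stacking `F - sI` on top of `[Iₙ 0]` gives a matrix of rank `n + q`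
(PBH test). -/
theorem stmt_8 (n q : ℕ) (hn : 1 ≤ n) (hq : 1 ≤ q)
    (A : Matrix (Fin n) (Fin n) ℝ) (B : Matrix (Fin n) (Fin q) ℝ)
    (C : Matrix (Fin q) (Fin n) ℝ)
    (hB : B.rank = q) :
    ∀ s : ℂ,
      (Matrix.fromRows
        ((Matrix.fromBlocks (A + B * C) B (-(C * (A + B * C))) (-(C * B))).map
            Complex.ofReal
          - s • (1 : Matrix (Fin n ⊕ Fin q) (Fin n ⊕ Fin q) ℂ))
        (Matrix.fromCols (1 : Matrix (Fin n) (Fin n) ℂ)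
          (0 : Matrix (Fin n) (Fin q) ℂ))).rank = n + q := by
  intro s
  set M := (Matrix.fromRows
        ((Matrix.fromBlocks (A + B * C) B (-(C * (A + B * C))) (-(C * B))).map
            Complex.ofReal
          - s • (1 : Matrix (Fin n ⊕ Fin q) (Fin n ⊕ Fin q) ℂ))
        (Matrix.fromCols (1 : Matrix (Fin n) (Fin n) ℂ)
          (0 : Matrix (Fin n) (Fin q) ℂ))) with hM
  have hinj : Function.Injective M.mulVecLin := by
    rw [← LinearMap.ker_eq_bot]
    rw [Submodule.eq_bot_iff]
    intro v hv
    have h : M.mulVec v = 0 := hv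
    -- bottom rows: v ∘ Sum.inl = 0
    have hx : ∀ i : Fin n, v (Sum.inl i) = 0 := by
      intro i
      have := congrFun h (Sum.inr i)
      simpa [hM, Matrix.mulVec, dotProduct, Matrix.fromRows_apply_inr, Matrix.fromCols_apply_inl, Matrix.fromCols_apply_inr,
        Fintype.sum_sum_type, Matrix.one_apply, Finset.sum_ite_eq] using this
    -- top rows (first block): B * (v ∘ Sum.inr) = 0
    have he : v ∘ Sum.inr = 0 := by
      refine aux_inj_complex B hB _ ?_
      intro i
      have := congrFun h (Sum.inl (Sum.inl i))
      simp [hM, Matrix.mulVec, dotProduct, Matrix.fromRows_apply_inl, Matrix.fromBlocks,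
        Fintype.sum_sum_type, Matrix.one_apply, hx, Matrix.sub_apply,
        Matrix.smul_apply, Matrix.map_apply] at this
      simpa [hx] using this
    funext j
    cases j with
    | inl i => exact hx i
    | inr i => exact congrFun he i
  rw [Matrix.rank]
  rw [LinearMap.finrank_range_of_inj hinj]
  simp
end

section
/- Let n ≥ 1, let Q ∈ ℝ^{n×n} be symmetric, let γx > 0, a > 0, b > 0, c > 0, pᵢ > 0 and αᵢ ∈ (0, 1]. If x ∈ ℝⁿ and eᵢ ∈ ℝ satisfy −αᵢ·xᵀQx + (a + b·pᵢ)·|x|·|eᵢ| + c·pᵢ·eᵢ² ≤ −γx·|x|², then eᵢ² ≤ (λmax(Q)/(c·pᵢ))·|x|². -/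
open Matrix


lemma quad_le_sup (n : ℕ) (hn : 1 ≤ n)
    (Q : Matrix (Fin n) (Fin n) ℝ) (hQ : Q.IsHermitian) (x : Fin n → ℝ) :
    x ⬝ᵥ Q.mulVec x ≤ (⨆ i, hQ.eigenvalues i) * (x ⬝ᵥ x) := by
  haveI : Nonempty (Fin n) := ⟨⟨0, hn⟩⟩
  set U : Matrix (Fin n) (Fin n) ℝ := (hQ.eigenvectorUnitary : Matrix (Fin n) (Fin n) ℝ) with hUdef
  have hU : U ∈ unitaryGroup (Fin n) ℝ := hQ.eigenvectorUnitary.2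
  set y : Fin n → ℝ := Uᵀ *ᵥ x with hy
  have hyy : y ⬝ᵥ y = x ⬝ᵥ x := by
    have h1 : U * star U = 1 := (Unitary.mem_iff.mp hU).2
    calc y ⬝ᵥ y = x ⬝ᵥ (U * star U) *ᵥ x := by
          rw [← mulVec_mulVec, dotProduct_mulVec, hy, ← mulVec_transpose,
            star_eq_conjTranspose, conjTranspose_eq_transpose_of_trivial,
            transpose_transpose, dotProduct_comm]
      _ = x ⬝ᵥ x := by rw [h1, one_mulVec]
  have hquad : x ⬝ᵥ Q.mulVec x = ∑ i, hQ.eigenvalues i * y i ^ 2 := by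
    conv_lhs => rw [hQ.spectral_theorem, Unitary.conjStarAlgAut_apply]
    rw [← mulVec_mulVec, ← mulVec_mulVec, dotProduct_mulVec, ← mulVec_transpose,
      star_eq_conjTranspose, conjTranspose_eq_transpose_of_trivial, ← hUdef, ← hy]
    simp [dotProduct, mulVec_diagonal, Finset.mul_sum]
    congr 1; ext i; ring
  rw [hquad, ← hyy]
  have hb : BddAbove (Set.range hQ.eigenvalues) := Set.Finite.bddAbove (Set.finite_range _)
  calc ∑ i, hQ.eigenvalues i * y i ^ 2
      ≤ ∑ i, (⨆ j, hQ.eigenvalues j) * y i ^ 2 := by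
        apply Finset.sum_le_sum
        intro i _
        exact mul_le_mul_of_nonneg_right (le_ciSup hb i) (sq_nonneg _)
    _ = (⨆ j, hQ.eigenvalues j) * (y ⬝ᵥ y) := by
        rw [← Finset.mul_sum]
        congr 1
        simp [dotProduct, sq]
/-- Error bound (27) in the proof of Theorem 2: membership of `(x, eᵢ)` in the
flow set `C̄ᵢ` of the asynchronous transmission policy, i.e.
`-αᵢ xᵀQx + (a + b pᵢ)|x||eᵢ| + c pᵢ eᵢ² ≤ -γx |x|²`, implies
`eᵢ² ≤ (λmax(Q)/(c pᵢ)) |x|²`. -/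
theorem stmt_10 (n : ℕ) (hn : 1 ≤ n)
    (Q : Matrix (Fin n) (Fin n) ℝ) (hQ : Q.IsHermitian)
    (γx a b c pi αi : ℝ) (hγx : 0 < γx) (ha : 0 < a) (hb : 0 < b) (hc : 0 < c)
    (hpi : 0 < pi) (hαi : αi ∈ Set.Ioc (0 : ℝ) 1)
    (x : Fin n → ℝ) (ei : ℝ)
    (hmem : -αi * (x ⬝ᵥ Q.mulVec x)
        + (a + b * pi) * Real.sqrt (x ⬝ᵥ x) * |ei| + c * pi * ei ^ 2
      ≤ -γx * (x ⬝ᵥ x)) :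
    ei ^ 2 ≤ ((⨆ i, hQ.eigenvalues i) / (c * pi)) * (x ⬝ᵥ x) := by
  obtain ⟨hα0, hα1⟩ := hαi
  have hxx : 0 ≤ x ⬝ᵥ x := Finset.sum_nonneg fun i _ => mul_self_nonneg _
  have hQx := quad_le_sup n hn Q hQ x
  have hs : 0 ≤ (a + b * pi) * Real.sqrt (x ⬝ᵥ x) * |ei| :=
    mul_nonneg (mul_nonneg (by positivity) (Real.sqrt_nonneg _)) (abs_nonneg ei)
  have h1 : c * pi * ei ^ 2 ≤ αi * (x ⬝ᵥ Q.mulVec x) := by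
    nlinarith [mul_nonneg hγx.le hxx]
  have hq0 : 0 ≤ x ⬝ᵥ Q.mulVec x := by
    nlinarith [sq_nonneg ei, mul_nonneg (mul_nonneg hc.le hpi.le) (sq_nonneg ei)]
  have h2 : αi * (x ⬝ᵥ Q.mulVec x) ≤ x ⬝ᵥ Q.mulVec x := by nlinarith
  rw [div_mul_eq_mul_div, le_div_iff₀ (by positivity : (0:ℝ) < c * pi)]
  nlinarith
end

section
/- Let n ≥ 1, let Q ∈ ℝ^{n×n} be symmetric positive definite, let γx > 0, a > 0, b > 0, c > 0, pᵢ > 0, λ > 0 and αᵢ ∈ (0, 1]. Then there exist Δ and ρ with 0 < Δ < ρ such that for all τᵢ ∈ [Δ, 2ρ] and all x ∈ ℝⁿ, eᵢ ∈ ℝ satisfying −αᵢ·xᵀQx + (a + b·pᵢ)·|x|·|eᵢ| + c·pᵢ·eᵢ² ≤ −γx·|x|², one has: −αᵢ·xᵀQx + (a + exp((2ρ − τᵢ)λ)·pᵢ·b)·|x|·|eᵢ| + exp((2ρ − τᵢ)λ)·pᵢ·c·eᵢ² ≤ −(γx/2)·|x|². -/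
set_option maxHeartbeats 1000000


open Matrix

/-- Flow-decrease estimate (28) in the proof of Theorem 2: there exist
`0 < Δ < ρ` such that for all `τᵢ ∈ [Δ, 2ρ]` and all `(x, eᵢ)` in the flow set
`C̄ᵢ` of the asynchronous transmission policy, the summand `πᵢ` with the
exponential weighting satisfies
`-αᵢ xᵀQx + (a + exp((2ρ-τᵢ)λ) pᵢ b)|x||eᵢ| + exp((2ρ-τᵢ)λ) pᵢ c eᵢ²
  ≤ -(γx/2)|x|²`. -/
theorem stmt_11 (n : ℕ) (hn : 1 ≤ n)
    (Q : Matrix (Fin n) (Fin n) ℝ) (hQ : Q.PosDef)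
    (γx a b c pi lam αi : ℝ) (hγx : 0 < γx) (ha : 0 < a) (hb : 0 < b)
    (hc : 0 < c) (hpi : 0 < pi) (hlam : 0 < lam) (hαi : αi ∈ Set.Ioc (0 : ℝ) 1) :
    ∃ Δ ρ : ℝ, 0 < Δ ∧ Δ < ρ ∧
      ∀ (τi : ℝ), τi ∈ Set.Icc Δ (2 * ρ) →
      ∀ (x : Fin n → ℝ) (ei : ℝ),
        -αi * (x ⬝ᵥ Q.mulVec x)
            + (a + b * pi) * Real.sqrt (x ⬝ᵥ x) * |ei| + c * pi * ei ^ 2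
          ≤ -γx * (x ⬝ᵥ x) →
        -αi * (x ⬝ᵥ Q.mulVec x)
            + (a + Real.exp ((2 * ρ - τi) * lam) * pi * b)
              * Real.sqrt (x ⬝ᵥ x) * |ei|
            + Real.exp ((2 * ρ - τi) * lam) * pi * c * ei ^ 2
          ≤ -(γx / 2) * (x ⬝ᵥ x) := by
  obtain ⟨hαi0, hαi1⟩ := hαi
  set S : ℝ := ∑ i, ∑ j, |Q i j| with hSdef
  have hS0 : 0 ≤ S := by positivity
  -- each coordinate square is bounded by the dot product
  have hs : ∀ (x : Fin n → ℝ) i, (x i) ^ 2 ≤ x ⬝ᵥ x := by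
    intro x i
    have h : x ⬝ᵥ x = ∑ j, (x j) ^ 2 := by simp [dotProduct, sq]
    rw [h]
    exact Finset.single_le_sum (f := fun j => (x j) ^ 2)
      (fun j _ => sq_nonneg _) (Finset.mem_univ i)
  have hsnn : ∀ (x : Fin n → ℝ), 0 ≤ x ⬝ᵥ x := by
    intro x
    have h : x ⬝ᵥ x = ∑ j, (x j) ^ 2 := by simp [dotProduct, sq]
    rw [h]; positivity
  -- quadratic form bound
  have hQb : ∀ (x : Fin n → ℝ), x ⬝ᵥ Q.mulVec x ≤ S * (x ⬝ᵥ x) := by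
    intro x
    have h1 : x ⬝ᵥ Q.mulVec x = ∑ i, ∑ j, x i * (Q i j * x j) := by
      simp [dotProduct, Matrix.mulVec, Finset.mul_sum]
    rw [h1, hSdef, Finset.sum_mul]
    apply Finset.sum_le_sum; intro i _
    rw [Finset.sum_mul]
    apply Finset.sum_le_sum; intro j _
    have habs : x i * (Q i j * x j) ≤ |x i| * (|Q i j| * |x j|) := by
      calc x i * (Q i j * x j) ≤ |x i * (Q i j * x j)| := le_abs_self _
        _ = |x i| * (|Q i j| * |x j|) := by rw [abs_mul, abs_mul]
    have h2 := hs x i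
    have h3 := hs x j
    nlinarith [sq_nonneg (|x i| - |x j|), abs_nonneg (Q i j), abs_nonneg (x i),
      abs_nonneg (x j), sq_abs (x i), sq_abs (x j)]
  -- choose constants
  set ε : ℝ := γx / (4 * (S + 1)) with hεdef
  have hε : 0 < ε := by positivity
  set L : ℝ := Real.log (1 + ε) with hLdef
  have hL : 0 < L := Real.log_pos (by linarith)
  refine ⟨L / (2 * lam), 3 * L / (4 * lam), by positivity, by
      rw [div_lt_div_iff₀ (by positivity) (by positivity)]; nlinarith, ?_⟩
  intro τi hτ x ei hhyp
  obtain ⟨hτ1, hτ2⟩ := hτ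
  set μ : ℝ := Real.exp ((2 * (3 * L / (4 * lam)) - τi) * lam) with hμdef
  have hμ1 : μ ≤ 1 + ε := by
    rw [hμdef]
    calc Real.exp ((2 * (3 * L / (4 * lam)) - τi) * lam)
        ≤ Real.exp L := by
          apply Real.exp_le_exp.mpr
          have h' : L ≤ τi * (2 * lam) := by
            rw [div_le_iff₀ (by positivity)] at hτ1; exact hτ1
          have hexp : (2 * (3 * L / (4 * lam)) - τi) * lam = 3 * L / 2 - τi * lam := by
            field_simp; ring
          rw [hexp]; nlinarith
      _ = 1 + ε := Real.exp_log (by linarith)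
  set s : ℝ := x ⬝ᵥ x with hsdef
  set X : ℝ := Real.sqrt s with hXdef
  have hs0 : 0 ≤ s := hsnn x
  have hX0 : 0 ≤ X := Real.sqrt_nonneg _
  have hE0 : 0 ≤ |ei| := abs_nonneg _
  have hαQ : αi * (x ⬝ᵥ Q.mulVec x) ≤ S * s := by
    have h1 : αi * (x ⬝ᵥ Q.mulVec x) ≤ αi * (S * s) :=
      mul_le_mul_of_nonneg_left (hQb x) hαi0.le
    have h2 : αi * (S * s) ≤ 1 * (S * s) :=
      mul_le_mul_of_nonneg_right hαi1 (by positivity)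
    linarith
  -- from the hypothesis, bound the cross terms
  have hsum : (a + b * pi) * X * |ei| + c * pi * ei ^ 2 ≤ S * s := by
    have := hhyp
    nlinarith
  have hXE0 : 0 ≤ X * |ei| := by positivity
  have haXE : 0 ≤ a * (X * |ei|) := mul_nonneg ha.le hXE0
  have hce : 0 ≤ c * pi * ei ^ 2 := by positivity
  have habXE : 0 ≤ (a + b * pi) * X * |ei| := by positivity
  have hT1 : pi * b * (X * |ei|) ≤ S * s := by nlinarith
  have hT2 : pi * c * ei ^ 2 ≤ S * s := by nlinarith
  have hT0 : 0 ≤ pi * b * (X * |ei|) + pi * c * ei ^ 2 := by positivity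
  have key : (μ - 1) * (pi * b * (X * |ei|) + pi * c * ei ^ 2) ≤ γx / 2 * s := by
    have h1 : (μ - 1) * (pi * b * (X * |ei|) + pi * c * ei ^ 2)
        ≤ ε * (pi * b * (X * |ei|) + pi * c * ei ^ 2) :=
      mul_le_mul_of_nonneg_right (by linarith) hT0
    have h2 : ε * (pi * b * (X * |ei|) + pi * c * ei ^ 2) ≤ ε * (2 * (S + 1) * s) := by
      apply mul_le_mul_of_nonneg_left _ hε.le
      nlinarith
    have h3 : ε * (2 * (S + 1) * s) = γx / 2 * s := by
      rw [hεdef]; field_simp; ring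
    linarith
  have expand :
      -αi * (x ⬝ᵥ Q.mulVec x) + (a + μ * pi * b) * X * |ei| + μ * pi * c * ei ^ 2
        = (-αi * (x ⬝ᵥ Q.mulVec x) + (a + b * pi) * X * |ei| + c * pi * ei ^ 2)
          + (μ - 1) * (pi * b * (X * |ei|) + pi * c * ei ^ 2) := by ring
  rw [expand]
  linarith
end

section
/- Let n ≥ 1, let Q ∈ ℝ^{n×n} be symmetric positive definite with λ0 := λmin(Q), and let ε > 0, a > 0, b > 0, c > 0, pᵢ > 0. Then there exist λ > 0, ρ > 0 and λ1 > 0 such that for every αᵢ ≥ ε, every τᵢ ∈ [0, 2ρ], and all x ∈ ℝⁿ, eᵢ ∈ ℝ: −αᵢ·xᵀQx + (a + exp((2ρ − τᵢ)λ)·pᵢ·b)·|x|·|eᵢ| + pᵢ·exp((2ρ − τᵢ)λ)·(c − λ)·eᵢ² ≤ −(ε·λ0/2)·|x|² − λ1·exp((2ρ − τᵢ)λ)·eᵢ². -/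
open Matrix

lemma quad_lower_aux {n : ℕ} (A : Matrix (Fin n) (Fin n) ℝ) (hA : A.IsHermitian)
    (μ : ℝ) (h : ∀ i, μ ≤ hA.eigenvalues i) (x : Fin n → ℝ) :
    μ * (x ⬝ᵥ x) ≤ x ⬝ᵥ A.mulVec x := by
  have hdiag : (diagonal (fun i => hA.eigenvalues i - μ)).PosSemidef :=
    posSemidef_diagonal_iff.2 (fun i => sub_nonneg.2 (h i))
  have hB : (A - μ • 1).PosSemidef := by
    have hmm := hdiag.mul_mul_conjTranspose_same (hA.eigenvectorUnitary : Matrix (Fin n) (Fin n) ℝ)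
    convert hmm using 1
    have hU : (hA.eigenvectorUnitary : Matrix (Fin n) (Fin n) ℝ) *
        star (hA.eigenvectorUnitary : Matrix (Fin n) (Fin n) ℝ) = 1 :=
      (Matrix.mem_unitaryGroup_iff).mp hA.eigenvectorUnitary.2
    rw [Matrix.star_eq_conjTranspose] at hU
    have hdsub : diagonal (fun i => hA.eigenvalues i - μ)
        = diagonal (RCLike.ofReal ∘ hA.eigenvalues) - μ • (1 : Matrix (Fin n) (Fin n) ℝ) := by
      ext i j
      by_cases hij : i = j <;> simp [hij, Matrix.one_apply, diagonal]
    rw [hdsub]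
    conv_lhs => rw [hA.spectral_theorem]
    rw [Matrix.mul_sub, Matrix.sub_mul]
    congr 1
    rw [Matrix.mul_smul, Matrix.mul_one, Matrix.smul_mul, hU]
  have h2 := hB.dotProduct_mulVec_nonneg x
  simp only [RCLike.re_to_real, star_trivial, sub_mulVec, smul_mulVec, one_mulVec,
    dotProduct_sub, dotProduct_smul, smul_eq_mul] at h2
  linarith

set_option maxHeartbeats 1000000 in
lemma stmt_12_arith (ε a b c pi l0 : ℝ) (hε : 0 < ε) (ha : 0 < a) (hb : 0 < b)
    (hc : 0 < c) (hpi : 0 < pi) (hl0 : 0 < l0) :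
    ∃ lam ρ lam1 : ℝ, 0 < lam ∧ 0 < ρ ∧ 0 < lam1 ∧
      ∀ (αi : ℝ), ε ≤ αi →
      ∀ (τi : ℝ), τi ∈ Set.Icc 0 (2 * ρ) →
      ∀ (QF XX ei : ℝ), 0 ≤ XX → l0 * XX ≤ QF →
        -αi * QF
            + (a + Real.exp ((2 * ρ - τi) * lam) * pi * b) * Real.sqrt XX * |ei|
            + pi * Real.exp ((2 * ρ - τi) * lam) * (c - lam) * ei ^ 2
          ≤ -(ε * l0 / 2) * XX - lam1 * Real.exp ((2 * ρ - τi) * lam) * ei ^ 2 := by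
  set L : ℝ := ε * l0 with hLdef
  have hL : 0 < L := mul_pos hε hl0
  set K : ℝ := (a + Real.exp 2 * pi * b) ^ 2 with hKdef
  have hKnn : 0 ≤ K := sq_nonneg _
  set lam : ℝ := c + (1 + K / (2 * L)) / pi with hlamdef
  have hlam : 0 < lam := by
    rw [hlamdef]; positivity
  clear_value L K lam
  refine ⟨lam, 1 / lam, 1, hlam, by positivity, one_pos, ?_⟩
  intro αi hαi τi hτi QF XX ei hxx hquad
  obtain ⟨hτ0, hτ2⟩ := hτi
  set E : ℝ := Real.exp ((2 * (1 / lam) - τi) * lam) with hEdef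
  have hE1 : 1 ≤ E := by
    apply Real.one_le_exp
    apply mul_nonneg _ hlam.le
    linarith
  have hE2 : E ≤ Real.exp 2 := by
    apply Real.exp_le_exp.2
    have : (2 * (1 / lam) - τi) * lam ≤ 2 * (1 / lam) * lam := by
      apply mul_le_mul_of_nonneg_right _ hlam.le
      linarith
    calc (2 * (1 / lam) - τi) * lam ≤ 2 * (1 / lam) * lam := this
      _ = 2 := by field_simp
  set t : ℝ := a + E * pi * b with htdef
  have ht : 0 < t := by positivity
  set s : ℝ := Real.sqrt XX with hsdef
  have hs2 : s ^ 2 = XX := Real.sq_sqrt hxx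
  have hs0 : 0 ≤ s := Real.sqrt_nonneg _
  set u : ℝ := |ei| with hudef
  have hu0 : 0 ≤ u := abs_nonneg _
  have hu2 : u ^ 2 = ei ^ 2 := sq_abs ei
  clear_value E t s u
  have hQnn : 0 ≤ QF := le_trans (by positivity) hquad
  have h1 : -αi * QF ≤ -L * s ^ 2 := by
    have h1a : ε * (l0 * XX) ≤ ε * QF := mul_le_mul_of_nonneg_left hquad hε.le
    have h1b : ε * QF ≤ αi * QF := mul_le_mul_of_nonneg_right hαi hQnn
    rw [hs2]
    nlinarith
  have hplc : pi * (lam - c) = 1 + K / (2 * L) := by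
    rw [hlamdef]
    field_simp
    ring
  have hKD : (pi * (lam - c) - 1) * (2 * L) = K := by
    rw [hplc]
    field_simp
    ring
  have hplc1 : 0 ≤ pi * (lam - c) - 1 := by
    rw [hplc]
    have : 0 ≤ K / (2 * L) := by positivity
    linarith
  have hEK : 2 * L * (E * (pi * (lam - c) - 1)) = E * K := by
    rw [← hKD]; ring
  have hK : t ^ 2 ≤ K := by
    have htle : t ≤ a + Real.exp 2 * pi * b := by
      rw [htdef]
      nlinarith [mul_le_mul_of_nonneg_right hE2 (mul_pos hpi hb).le]
    rw [hKdef]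
    exact pow_le_pow_left₀ ht.le htle 2
  have hAM : 2 * L * (t * s * u) ≤ L ^ 2 * s ^ 2 + t ^ 2 * u ^ 2 := by
    nlinarith [sq_nonneg (L * s - t * u)]
  have h2 : t ^ 2 * u ^ 2 ≤ E * K * u ^ 2 := by
    nlinarith [mul_nonneg (sub_nonneg.2 hK) (sq_nonneg u),
      mul_nonneg (sub_nonneg.2 hE1) (mul_nonneg hKnn (sq_nonneg u))]
  have hEK2 : 2 * L * (E * (pi * (lam - c) - 1)) * u ^ 2 = E * K * u ^ 2 := by
    rw [hEK]
  have h3 : 2 * L * (t * s * u + pi * E * (c - lam) * u ^ 2 + E * u ^ 2)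
      ≤ 2 * L * (L / 2 * s ^ 2) := by
    nlinarith [hAM, h2, hEK2]
  have key : t * s * u + pi * E * (c - lam) * u ^ 2 + E * u ^ 2 ≤ L / 2 * s ^ 2 :=
    le_of_mul_le_mul_left h3 (by positivity)
  have hgoal : -αi * QF + t * s * u + pi * E * (c - lam) * u ^ 2
      ≤ -(L / 2) * s ^ 2 - 1 * E * u ^ 2 := by
    linarith
  rw [← hs2, ← hu2]
  linarith [hgoal]


/-- Flow-decrease estimate (26) in the proof of Theorem 2 (dwell-time phase
of the `i`-th timer): with `l0 = λmin(Q)`, there exist `λ, ρ, λ1 > 0` such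
that for every `αᵢ ≥ ε`, every `τᵢ ∈ [0, 2ρ]` and all `x`, `eᵢ`,
`-αᵢ xᵀQx + (a + exp((2ρ-τᵢ)λ) pᵢ b)|x||eᵢ| + pᵢ exp((2ρ-τᵢ)λ)(c - λ) eᵢ²
  ≤ -(ε l0 / 2)|x|² - λ1 exp((2ρ-τᵢ)λ) eᵢ²`. -/
theorem stmt_12 (n : ℕ) (hn : 1 ≤ n)
    (Q : Matrix (Fin n) (Fin n) ℝ) (hQ : Q.PosDef)
    (ε a b c pi : ℝ) (hε : 0 < ε) (ha : 0 < a) (hb : 0 < b) (hc : 0 < c)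
    (hpi : 0 < pi) :
    ∃ lam ρ lam1 : ℝ, 0 < lam ∧ 0 < ρ ∧ 0 < lam1 ∧
      ∀ (αi : ℝ), ε ≤ αi →
      ∀ (τi : ℝ), τi ∈ Set.Icc 0 (2 * ρ) →
      ∀ (x : Fin n → ℝ) (ei : ℝ),
        -αi * (x ⬝ᵥ Q.mulVec x)
            + (a + Real.exp ((2 * ρ - τi) * lam) * pi * b)
              * Real.sqrt (x ⬝ᵥ x) * |ei|
            + pi * Real.exp ((2 * ρ - τi) * lam) * (c - lam) * ei ^ 2
          ≤ -(ε * (⨅ i, hQ.1.eigenvalues i) / 2) * (x ⬝ᵥ x)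
            - lam1 * Real.exp ((2 * ρ - τi) * lam) * ei ^ 2 := by
  have hne : Nonempty (Fin n) := ⟨⟨0, hn⟩⟩
  have hle : ∀ i, (⨅ i, hQ.1.eigenvalues i) ≤ hQ.1.eigenvalues i := fun i =>
    ciInf_le (Set.Finite.bddBelow (Set.finite_range _)) i
  have hl0 : 0 < ⨅ i, hQ.1.eigenvalues i := by
    obtain ⟨i, hi⟩ := exists_eq_ciInf_of_finite (f := hQ.1.eigenvalues)
    rw [← hi]
    exact hQ.eigenvalues_pos i
  obtain ⟨lam, ρ, lam1, hlam, hρ, hlam1, H⟩ :=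
    stmt_12_arith ε a b c pi (⨅ i, hQ.1.eigenvalues i) hε ha hb hc hpi hl0
  refine ⟨lam, ρ, lam1, hlam, hρ, hlam1, ?_⟩
  intro αi hαi τi hτi x ei
  have hxx : 0 ≤ x ⬝ᵥ x := by
    simp only [dotProduct]
    exact Finset.sum_nonneg fun i _ => mul_self_nonneg _
  exact H αi hαi τi hτi (x ⬝ᵥ Q.mulVec x) (x ⬝ᵥ x) ei hxx
    (quad_lower_aux Q hQ.1 _ hle x)
end

section
/- Let n, q ≥ 1, A ∈ ℝ^{n×n}, B ∈ ℝ^{n×q}, C ∈ ℝ^{q×n}, L ∈ ℝ^{n×q}, and define F11 := A + BC, F12 := B, F21 := −C(A + BC), F22 := −CB, and the block matrix M := [[F11, F12, LC], [F21, F22, −CLC], [0, 0, A − LC]] ∈ ℝ^{(2n+q)×(2n+q)}, together with the output matrix H := [[Iₙ, 0, 0], [0, 0, Iₙ]] ∈ ℝ^{2n×(2n+q)}. If B has full column rank (rank B = q), then for every s ∈ ℂ, the complex matrix obtained by stacking M − s·I_{2n+q} on top of H has rank 2n + q; that is, the pair (H, M) is observable. -/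
open Matrix

/-- If the kernel of `mulVecLin` is trivial, the rank equals the number of columns. -/
lemma rank_eq_card_of_ker_eq_bot {m n : Type*} [Fintype m] [Fintype n] [DecidableEq n]
    {K : Type*} [Field K] (A : Matrix m n K)
    (h : LinearMap.ker A.mulVecLin = ⊥) : A.rank = Fintype.card n := by
  have := LinearMap.finrank_range_add_finrank_ker A.mulVecLin
  rw [h, finrank_bot, add_zero] at this
  rw [Matrix.rank, this]
  simp [Module.finrank_fintype_fun_eq_card]

/-- Full column rank over `ℝ` implies triviality of kernel over `ℝ`. -/
lemma ker_eq_bot_of_rank {m n : ℕ} (B : Matrix (Fin m) (Fin n) ℝ)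
    (hB : B.rank = n) : LinearMap.ker B.mulVecLin = ⊥ := by
  have h := LinearMap.finrank_range_add_finrank_ker B.mulVecLin
  rw [show Module.finrank ℝ (Fin n → ℝ) = n by simp] at h
  have hr : Module.finrank ℝ (LinearMap.range B.mulVecLin) = n := hB
  have : Module.finrank ℝ (LinearMap.ker B.mulVecLin) = 0 := by omega
  exact Submodule.finrank_eq_zero.mp this

/-- Observability of the pair `(H, M)` for the output-feedback
transmission-lazy closed loop, where
`M = [[F11, F12, LC], [F21, F22, -CLC], [0, 0, A - LC]]` (with `F11 = A+BC`,
`F12 = B`, `F21 = -C(A+BC)`, `F22 = -CB`) and `H = [[Iₙ,0,0],[0,0,Iₙ]]`: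
if `B` has full column rank then for every `s ∈ ℂ` the matrix obtained by
stacking `M - sI` on top of `H` has rank `2n + q` (PBH test). -/
theorem stmt_15 (n q : ℕ) (hn : 1 ≤ n) (hq : 1 ≤ q)
    (A : Matrix (Fin n) (Fin n) ℝ) (B : Matrix (Fin n) (Fin q) ℝ)
    (C : Matrix (Fin q) (Fin n) ℝ) (L : Matrix (Fin n) (Fin q) ℝ)
    (hB : B.rank = q) :
    ∀ s : ℂ,
      (Matrix.fromRows
        ((Matrix.fromBlocks
            (Matrix.fromBlocks (A + B * C) B (-(C * (A + B * C))) (-(C * B)))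
            (Matrix.fromRows (L * C) (-(C * L * C)))
            (0 : Matrix (Fin n) (Fin n ⊕ Fin q) ℝ)
            (A - L * C)).map Complex.ofReal
          - s • (1 : Matrix ((Fin n ⊕ Fin q) ⊕ Fin n) ((Fin n ⊕ Fin q) ⊕ Fin n) ℂ))
        ((Matrix.fromBlocks
            (Matrix.fromCols (1 : Matrix (Fin n) (Fin n) ℝ)
              (0 : Matrix (Fin n) (Fin q) ℝ))
            (0 : Matrix (Fin n) (Fin n) ℝ)
            (0 : Matrix (Fin n) (Fin n ⊕ Fin q) ℝ)
            (1 : Matrix (Fin n) (Fin n) ℝ)).map Complex.ofReal)).rank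
      = 2 * n + q := by
  intro s
  set N := (Matrix.fromRows
        ((Matrix.fromBlocks
            (Matrix.fromBlocks (A + B * C) B (-(C * (A + B * C))) (-(C * B)))
            (Matrix.fromRows (L * C) (-(C * L * C)))
            (0 : Matrix (Fin n) (Fin n ⊕ Fin q) ℝ)
            (A - L * C)).map Complex.ofReal
          - s • (1 : Matrix ((Fin n ⊕ Fin q) ⊕ Fin n) ((Fin n ⊕ Fin q) ⊕ Fin n) ℂ))
        ((Matrix.fromBlocks
            (Matrix.fromCols (1 : Matrix (Fin n) (Fin n) ℝ)
              (0 : Matrix (Fin n) (Fin q) ℝ))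
            (0 : Matrix (Fin n) (Fin n) ℝ)
            (0 : Matrix (Fin n) (Fin n ⊕ Fin q) ℝ)
            (1 : Matrix (Fin n) (Fin n) ℝ)).map Complex.ofReal)) with hN
  have hker : LinearMap.ker N.mulVecLin = ⊥ := by
    rw [LinearMap.ker_eq_bot']
    intro v hv
    rw [Matrix.mulVecLin_apply] at hv
    -- Extract H rows: v (inl (inl i)) = 0 and v (inr i) = 0
    have hH : ∀ r, (N *ᵥ v) (Sum.inr r) = 0 := fun r => by rw [hv]; rfl
    have hv1 : ∀ i, v (Sum.inl (Sum.inl i)) = 0 := by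
      intro i
      have := hH (Sum.inl i)
      simpa [hN, Matrix.mulVec, dotProduct, Fintype.sum_sum_type,
        Matrix.one_apply, apply_ite (Complex.ofReal), Finset.sum_ite_eq] using this
    have hv3 : ∀ i, v (Sum.inr i) = 0 := by
      intro i
      have := hH (Sum.inr i)
      simpa [hN, Matrix.mulVec, dotProduct, Fintype.sum_sum_type,
        Matrix.one_apply, apply_ite (Complex.ofReal), Finset.sum_ite_eq] using this
    -- Now first block row of M - sI gives B v2 = 0
    have hBv : ∀ i : Fin n, ∑ j : Fin q, (B i j : ℂ) * v (Sum.inl (Sum.inr j)) = 0 := by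
      intro i
      have := congrFun hv (Sum.inl (Sum.inl (Sum.inl i)))
      simp only [hN, Matrix.fromRows_mulVec] at this
      simp only [Sum.elim_inl, Matrix.sub_mulVec, Matrix.smul_mulVec,
        Matrix.one_mulVec, Pi.sub_apply, Pi.smul_apply, Pi.zero_apply] at this
      rw [sub_eq_zero] at this
      have h2 : ((Matrix.fromBlocks
            (Matrix.fromBlocks (A + B * C) B (-(C * (A + B * C))) (-(C * B)))
            (Matrix.fromRows (L * C) (-(C * L * C)))
            (0 : Matrix (Fin n) (Fin n ⊕ Fin q) ℝ)
            (A - L * C)).map Complex.ofReal *ᵥ v) (Sum.inl (Sum.inl i))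
          = s * v (Sum.inl (Sum.inl i)) := this
      rw [hv1 i, mul_zero] at h2
      rw [← h2]
      simp [Matrix.mulVec, dotProduct, Fintype.sum_sum_type, hv1, hv3]
    -- B full column rank over ℝ ⇒ v2 = 0 over ℂ
    have hv2 : ∀ j, v (Sum.inl (Sum.inr j)) = 0 := by
      have hkB := ker_eq_bot_of_rank B hB
      rw [LinearMap.ker_eq_bot'] at hkB
      have hre : (fun j => (v (Sum.inl (Sum.inr j))).re) = 0 := by
        apply hkB
        ext i
        have := congrArg Complex.re (hBv i)
        simpa [Matrix.mulVecLin_apply, Matrix.mulVec, dotProduct,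
          Complex.re_sum] using this
      have him : (fun j => (v (Sum.inl (Sum.inr j))).im) = 0 := by
        apply hkB
        ext i
        have := congrArg Complex.im (hBv i)
        simpa [Matrix.mulVecLin_apply, Matrix.mulVec, dotProduct,
          Complex.im_sum] using this
      intro j
      have h1 := congrFun hre j
      have h2 := congrFun him j
      simp only [Pi.zero_apply] at h1 h2
      exact Complex.ext h1 h2
    ext (⟨i | j⟩ | i)
    · exact hv1 i
    · exact hv2 j
    · exact hv3 i
  rw [rank_eq_card_of_ker_eq_bot _ hker]
  simp [Fintype.card_sum]
  ring
end
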